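/- (Lemma 3.3) For every real β with 1 < β < 2, the series ∑_{k=0}^{∞} |ω_k^{(β)}| converges and satisfies ∑_{k=0}^{∞} |ω_k^{(β)}| ≤ −2·ω_1^{(β)} + |ω_2^{(β)}| − ω_2^{(β)} < ∞; consequently the generating function p(θ) = ∑_{k=−1}^{∞} ω_{k+1}^{(β)}·(e_1·e^{ikθ} + e_2·e^{−ikθ}) of the Toeplitz family (K_N) is in the Wiener class (its coefficient sequence is absolutely summable). -/
import Mathlib


open scoped Matrix

/-- The coefficients `g_k^{(β)}`. -/
noncomputable def gcoef (β : ℝ) : ℕ → ℝ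
  | 0 => 1
  | k + 1 => (1 - (β + 1) / ((k : ℝ) + 1)) * gcoef β k

/-- The WSGD coefficients `ω_k^{(β)}`. -/
noncomputable def w (β : ℝ) : ℕ → ℝ
  | 0 => β / 2 * gcoef β 0
  | k + 1 => β / 2 * gcoef β (k + 1) + (2 - β) / 2 * gcoef β k

/-- Partial sums of `gcoef`: `(-1)^N C(β-1, N)`. -/
noncomputable def tcoef (β : ℝ) : ℕ → ℝ
  | 0 => 1
  | k + 1 => (1 - β / ((k : ℝ) + 1)) * tcoef β k

lemma gcoef_zero (β : ℝ) : gcoef β 0 = 1 := rfl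
lemma tcoef_zero (β : ℝ) : tcoef β 0 = 1 := rfl

lemma gcoef_succ (β : ℝ) (k : ℕ) :
    gcoef β (k + 1) = (1 - (β + 1) / ((k : ℝ) + 1)) * gcoef β k := by simp [gcoef]

lemma w_zero (β : ℝ) : w β 0 = β / 2 * gcoef β 0 := rfl

lemma w_succ (β : ℝ) (k : ℕ) :
    w β (k + 1) = β / 2 * gcoef β (k + 1) + (2 - β) / 2 * gcoef β k := by simp [w]

lemma tcoef_rec (β : ℝ) (k : ℕ) :
    tcoef β (k + 1) = (1 - β / ((k : ℝ) + 1)) * tcoef β k := by simp [tcoef]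

lemma gcoef_eq_tcoef (β : ℝ) : ∀ N : ℕ,
    gcoef β (N + 1) = -(β / ((N : ℝ) + 1)) * tcoef β N := by
  intro N
  induction N with
  | zero => rw [gcoef_succ, gcoef_zero, tcoef_zero]; push_cast; ring
  | succ n ih =>
      have h1 : ((n : ℝ) + 1) ≠ 0 := by positivity
      have h2 : ((n : ℝ) + 1 + 1) ≠ 0 := by positivity
      rw [gcoef_succ, ih, tcoef_rec]
      push_cast
      field_simp
      ring

lemma tcoef_succ (β : ℝ) (N : ℕ) :
    tcoef β (N + 1) = tcoef β N + gcoef β (N + 1) := by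
  rw [gcoef_eq_tcoef, tcoef_rec]
  ring

lemma tcoef_nonpos (β : ℝ) (hβ1 : 1 < β) (hβ2 : β < 2) :
    ∀ N : ℕ, tcoef β (N + 1) ≤ 0 := by
  intro N
  induction N with
  | zero => rw [tcoef_rec, tcoef_zero]; norm_num; nlinarith
  | succ n ih =>
      rw [tcoef_rec]
      have hn : (0 : ℝ) ≤ n := Nat.cast_nonneg n
      push_cast
      have h : 0 ≤ 1 - β / ((n : ℝ) + 1 + 1) := by
        rw [sub_nonneg, div_le_one (by positivity)]
        linarith
      exact mul_nonpos_of_nonneg_of_nonpos h ih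

lemma tcoef_abs_le (β : ℝ) (hβ1 : 1 < β) (hβ2 : β < 2) :
    ∀ N : ℕ, |tcoef β (N + 1)| ≤ (β - 1) / ((N : ℝ) + 1) := by
  intro N
  induction N with
  | zero =>
      rw [tcoef_rec, tcoef_zero]
      norm_num
      rw [abs_of_nonpos (by nlinarith)]
      nlinarith
  | succ n ih =>
      have hn : (0 : ℝ) ≤ n := Nat.cast_nonneg n
      have h : 0 ≤ 1 - β / ((n : ℝ) + 1 + 1) := by
        rw [sub_nonneg, div_le_one (by positivity)]; linarith
      rw [tcoef_rec]
      push_cast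
      rw [abs_mul, abs_of_nonneg h]
      calc (1 - β / ((n : ℝ) + 1 + 1)) * |tcoef β (n + 1)|
          ≤ (1 - 1 / ((n : ℝ) + 1 + 1)) * ((β - 1) / ((n : ℝ) + 1)) := by
            have hd : (1:ℝ) / ((n:ℝ)+1+1) ≤ β / ((n:ℝ)+1+1) := by
              gcongr <;> linarith
            apply mul_le_mul (by linarith) ih (abs_nonneg _)
            have : 1 / ((n:ℝ)+1+1) ≤ 1 := by
              rw [div_le_one (by positivity)]; linarith
            linarith
        _ = (β - 1) / ((n : ℝ) + 1 + 1) := by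
            have h1 : ((n : ℝ) + 1) ≠ 0 := by positivity
            have h2 : ((n : ℝ) + 1 + 1) ≠ 0 := by positivity
            field_simp
            ring

/-- Partial sums of `w`. -/
lemma sum_w (β : ℝ) : ∀ N : ℕ,
    ∑ k ∈ Finset.range (N + 2), w β k
      = β / 2 * tcoef β (N + 1) + (2 - β) / 2 * tcoef β N := by
  intro N
  induction N with
  | zero =>
      rw [Finset.sum_range_succ, Finset.sum_range_one, w_zero, w_succ, gcoef_zero]
      have := tcoef_succ β 0
      rw [tcoef_zero] at this ⊢
      rw [this]; ring
  | succ n ih =>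
      rw [Finset.sum_range_succ, ih]
      have hw : w β (n + 1 + 1) = β / 2 * gcoef β (n + 2) + (2 - β) / 2 * gcoef β (n + 1) := by
        rw [w_succ]
      rw [hw]
      have h1 : tcoef β (n + 2) = tcoef β (n + 1) + gcoef β (n + 2) := tcoef_succ β (n + 1)
      have h2 : tcoef β (n + 1) = tcoef β n + gcoef β (n + 1) := tcoef_succ β n
      have e : (n : ℕ) + 1 + 1 = n + 2 := by omega
      rw [e, h1, h2]
      ring

lemma gcoef_add_two_nonneg (β : ℝ) (hβ1 : 1 < β) (hβ2 : β < 2) :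
    ∀ k : ℕ, 0 ≤ gcoef β (k + 2) := by
  intro k
  induction k with
  | zero =>
      rw [show (0:ℕ)+2 = 1+1 from rfl, gcoef_succ, gcoef_succ, gcoef_zero]
      norm_num
      nlinarith
  | succ n ih =>
      rw [show n+1+2 = (n+2)+1 from rfl, gcoef_succ]
      have hn : (0 : ℝ) ≤ n := Nat.cast_nonneg n
      apply mul_nonneg _ ih
      rw [sub_nonneg, div_le_one (by positivity)]
      push_cast
      linarith

lemma w_nonneg (β : ℝ) (hβ1 : 1 < β) (hβ2 : β < 2) :
    ∀ k : ℕ, 0 ≤ w β (k + 3) := by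
  intro k
  rw [show k+3 = (k+2)+1 from rfl, w_succ]
  have h1 := gcoef_add_two_nonneg β hβ1 hβ2 (k + 1)
  have h2 := gcoef_add_two_nonneg β hβ1 hβ2 k
  rw [show k+1+2 = k+2+1 from rfl] at h1
  nlinarith

lemma w_one_nonpos (β : ℝ) (hβ1 : 1 < β) (hβ2 : β < 2) : w β 1 ≤ 0 := by
  rw [show (1:ℕ) = 0+1 from rfl, w_succ, gcoef_succ, gcoef_zero]
  norm_num
  nlinarith

lemma sum_w_nonpos (β : ℝ) (hβ1 : 1 < β) (hβ2 : β < 2) (N : ℕ) :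
    ∑ k ∈ Finset.range (N + 3), w β k ≤ 0 := by
  rw [show N+3 = (N+1)+2 from rfl, sum_w]
  have h1 := tcoef_nonpos β hβ1 hβ2 (N + 1)
  have h2 := tcoef_nonpos β hβ1 hβ2 N
  nlinarith

lemma sum_abs_w_le (β : ℝ) (hβ1 : 1 < β) (hβ2 : β < 2) (n : ℕ) :
    ∑ k ∈ Finset.range n, |w β k| ≤ -2 * w β 1 + |w β 2| - w β 2 := by
  have key : ∀ N : ℕ, ∑ k ∈ Finset.range (N + 3), |w β k|
      ≤ -2 * w β 1 + |w β 2| - w β 2 := by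
    intro N
    have hsplit : ∑ k ∈ Finset.range (N + 3), |w β k|
        = (∑ k ∈ Finset.range 3, |w β k|) + ∑ k ∈ Finset.range N, |w β (3 + k)| := by
      rw [add_comm N 3, Finset.sum_range_add]
    have habs : ∀ k ∈ Finset.range N, |w β (3 + k)| = w β (3 + k) := by
      intro k _
      rw [add_comm 3 k]
      exact abs_of_nonneg (w_nonneg β hβ1 hβ2 k)
    have hsum3 : ∑ k ∈ Finset.range N, w β (3 + k)
        = (∑ k ∈ Finset.range (N + 3), w β k) - ∑ k ∈ Finset.range 3, w β k := by
      rw [add_comm N 3, Finset.sum_range_add]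
      ring
    rw [hsplit, Finset.sum_congr rfl habs, hsum3]
    have h0 : ∑ k ∈ Finset.range 3, |w β k| = |w β 0| + |w β 1| + |w β 2| := by
      simp [Finset.sum_range_succ]
    have h0' : ∑ k ∈ Finset.range 3, w β k = w β 0 + w β 1 + w β 2 := by
      simp [Finset.sum_range_succ]
    have hN := sum_w_nonpos β hβ1 hβ2 N
    have hw0 : |w β 0| = w β 0 := by
      rw [w_zero, gcoef_zero]
      exact abs_of_nonneg (by nlinarith)
    have hw1 : |w β 1| = -(w β 1) := abs_of_nonpos (w_one_nonpos β hβ1 hβ2)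
    rw [h0, h0', hw0, hw1]
    linarith
  calc ∑ k ∈ Finset.range n, |w β k|
      ≤ ∑ k ∈ Finset.range (n + 3), |w β k| := by
        apply Finset.sum_le_sum_of_subset_of_nonneg
        · exact Finset.range_subset_range.2 (by omega)
        · intro k _ _; positivity
    _ ≤ _ := key n

set_option maxHeartbeats 1000000 in
theorem wsgd_abs_summable_wiener (β e1 e2 : ℝ) (hβ1 : 1 < β) (hβ2 : β < 2)
    (he1 : 0 < e1) (he2 : 0 < e2) :
    Summable (fun k : ℕ => |w β k|) ∧
    (∑' k : ℕ, |w β k|) ≤ -2 * w β 1 + |w β 2| - w β 2 ∧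
    Summable (fun k : ℤ =>
      |(if -1 ≤ k then e1 * w β (k + 1).toNat else 0) +
        (if k ≤ 1 then e2 * w β (1 - k).toNat else 0)|) := by
  have hsum : Summable (fun k : ℕ => |w β k|) :=
    summable_of_sum_range_le (fun n => abs_nonneg _) (sum_abs_w_le β hβ1 hβ2)
  refine ⟨hsum, Real.tsum_le_of_sum_range_le (fun n => abs_nonneg _)
    (sum_abs_w_le β hβ1 hβ2), ?_⟩
  set A : ℤ → ℝ := fun k => if -1 ≤ k then e1 * w β (k + 1).toNat else 0 with hA
  set B : ℤ → ℝ := fun k => if k ≤ 1 then e2 * w β (1 - k).toNat else 0 with hB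
  have hshift : Summable (fun n : ℕ => |w β (n + 1)|) := (summable_nat_add_iff 1).2 hsum
  have hAsum : Summable (fun k : ℤ => |A k|) := by
    apply Summable.of_nat_of_neg_add_one
    · have : (fun n : ℕ => |A n|) = fun n : ℕ => e1 * |w β (n + 1)| := by
        funext n
        simp only [hA]
        rw [if_pos (by omega : (-1:ℤ) ≤ (n:ℤ))]
        rw [show ((n:ℤ) + 1).toNat = n + 1 by omega]
        rw [abs_mul, abs_of_nonneg he1.le]
      rw [this]
      exact hshift.mul_left e1
    · apply summable_of_ne_finset_zero (s := Finset.range 1)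
      intro n hn
      simp only [Finset.mem_range, not_lt] at hn
      simp only [hA]
      rw [if_neg (by omega), abs_zero]
  have hBsum : Summable (fun k : ℤ => |B k|) := by
    apply Summable.of_nat_of_neg_add_one
    · apply summable_of_ne_finset_zero (s := Finset.range 2)
      intro n hn
      have : ¬ ((n : ℤ)) ≤ 1 := by
        simp at hn
        omega
      simp only [hB]
      rw [if_neg this, abs_zero]
    · have h2 : Summable (fun n : ℕ => |w β (n + 2)|) := (summable_nat_add_iff 2).2 hsum
      have heq : (fun n : ℕ => |B (-((n : ℤ) + 1))|) = fun n : ℕ => e2 * |w β (n + 2)| := by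
        funext n
        simp only [hB]
        rw [if_pos (by omega : -((n:ℤ) + 1) ≤ 1)]
        rw [show ((1:ℤ) - -((n:ℤ) + 1)).toNat = n + 2 by omega]
        rw [abs_mul, abs_of_nonneg he2.le]
      rw [heq]
      exact h2.mul_left e2
  apply Summable.of_nonneg_of_le (fun k => abs_nonneg _)
    (fun k => abs_add_le (A k) (B k)) (hAsum.add hBsum)
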